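/- Let μ be a finite Borel measure on a compact metric space K and let F ∈ L¹(K × K, μ × μ). Then the cut norm of F equals the supremum, over all continuous functions g, h : K → [0,1], of |∫_{K×K} F(x,y) g(x) h(y) dμ(x) dμ(y)|. -/

import Mathlib

open MeasureTheory Filter Topology

section helpers

variable {K : Type*} [MeasurableSpace K] {μ : Measure K} [IsFiniteMeasure μ]

lemma indicator_abs_le_one (T : Set K) (x : K) : |T.indicator (1 : K → ℝ) x| ≤ 1 := by
  by_cases hx : x ∈ T <;> simp [Set.indicator_apply, hx]

lemma integrable_mul_comp {F : K × K → ℝ} (hF : Integrable F (μ.prod μ))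
    {a b : K → ℝ} (ha : Measurable a) (hb : Measurable b)
    (ha1 : ∀ x, |a x| ≤ 1) (hb1 : ∀ x, |b x| ≤ 1) :
    Integrable (fun p : K × K => F p * a p.1 * b p.2) (μ.prod μ) := by
  have h : (fun p : K × K => F p * a p.1 * b p.2)
      = fun p => (a p.1 * b p.2) * F p := by funext p; ring
  rw [h]
  refine hF.bdd_mul (c := 1) ?_ (Filter.Eventually.of_forall fun p => ?_)
  · exact ((ha.comp measurable_fst).mul (hb.comp measurable_snd)).aestronglyMeasurable
  · rw [Real.norm_eq_abs, abs_mul]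
    exact mul_le_one₀ (ha1 p.1) (abs_nonneg _) (hb1 p.2)

lemma step_fst (G : K × K → ℝ) (hG : Integrable G (μ.prod μ))
    {g : K → ℝ} (hg : Measurable g) (hg0 : ∀ x, 0 ≤ g x) (hg1 : ∀ x, g x ≤ 1) :
    ∃ T : Set K, MeasurableSet T ∧
      |∫ p, G p * g p.1 ∂(μ.prod μ)| ≤ |∫ p, G p * T.indicator 1 p.1 ∂(μ.prod μ)| := by
  have hφ : Integrable (fun x => ∫ y, G (x, y) ∂μ) μ := hG.integral_prod_left
  set ψ : K → ℝ := hφ.1.mk _ with hψdef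
  have hψm : StronglyMeasurable ψ := hφ.1.stronglyMeasurable_mk
  have hψe : (fun x => ∫ y, G (x, y) ∂μ) =ᵐ[μ] ψ := hφ.1.ae_eq_mk
  have hψint : Integrable ψ μ := hφ.congr hψe
  have key : ∀ a : K → ℝ, Measurable a → (∀ x, |a x| ≤ 1) →
      ∫ p, G p * a p.1 ∂(μ.prod μ) = ∫ x, a x * ψ x ∂μ := by
    intro a ham ha1
    have hint : Integrable (fun p : K × K => G p * a p.1) (μ.prod μ) := by
      have h : (fun p : K × K => G p * a p.1) = fun p => a p.1 * G p := by funext p; ring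
      rw [h]
      exact hG.bdd_mul (c := 1) (ham.comp measurable_fst).aestronglyMeasurable
        (Filter.Eventually.of_forall fun p => by simpa [Real.norm_eq_abs] using ha1 p.1)
    rw [MeasureTheory.integral_prod _ hint]
    have h2 : ∀ x, ∫ y, G (x, y) * a x ∂μ = a x * ∫ y, G (x, y) ∂μ := by
      intro x; rw [integral_mul_const]; ring
    simp_rw [h2]
    exact integral_congr_ae (hψe.mono fun x hx => congrArg (fun t => a x * t) hx)
  set T : Set K := {x | 0 ≤ ψ x} with hTdef
  set T' : Set K := {x | ψ x ≤ 0} with hT'def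
  have hTm : MeasurableSet T := measurableSet_le measurable_const hψm.measurable
  have hT'm : MeasurableSet T' := measurableSet_le hψm.measurable measurable_const
  have hg1' : ∀ x, |g x| ≤ 1 := fun x => by rw [abs_of_nonneg (hg0 x)]; exact hg1 x
  have hgψ : Integrable (fun x => g x * ψ x) μ :=
    hψint.bdd_mul (c := 1) hg.aestronglyMeasurable (Filter.Eventually.of_forall fun x => by simpa [Real.norm_eq_abs] using hg1' x)
  have hTψ : Integrable (fun x => T.indicator 1 x * ψ x) μ :=
    hψint.bdd_mul (c := 1) (measurable_one.indicator hTm).aestronglyMeasurable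
      (Filter.Eventually.of_forall fun x => by simpa [Real.norm_eq_abs] using indicator_abs_le_one T x)
  have hT'ψ : Integrable (fun x => T'.indicator 1 x * ψ x) μ :=
    hψint.bdd_mul (c := 1) (measurable_one.indicator hT'm).aestronglyMeasurable
      (Filter.Eventually.of_forall fun x => by simpa [Real.norm_eq_abs] using indicator_abs_le_one T' x)
  have hle1 : ∫ x, g x * ψ x ∂μ ≤ ∫ x, T.indicator 1 x * ψ x ∂μ := by
    refine integral_mono hgψ hTψ fun x => ?_
    by_cases hx : 0 ≤ ψ x
    · rw [Set.indicator_of_mem (show x ∈ T from hx), Pi.one_apply, one_mul]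
      exact mul_le_of_le_one_left hx (hg1 x)
    · rw [Set.indicator_of_notMem (show x ∉ T from hx), zero_mul]
      exact mul_nonpos_iff.mpr (Or.inl ⟨hg0 x, le_of_not_ge hx⟩)
  have hle2 : ∫ x, T'.indicator 1 x * ψ x ∂μ ≤ ∫ x, g x * ψ x ∂μ := by
    refine integral_mono hT'ψ hgψ fun x => ?_
    by_cases hx : ψ x ≤ 0
    · rw [Set.indicator_of_mem (show x ∈ T' from hx), Pi.one_apply, one_mul]
      nlinarith [hg0 x, hg1 x]
    · rw [Set.indicator_of_notMem (show x ∉ T' from hx), zero_mul]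
      exact mul_nonneg (hg0 x) (le_of_not_ge hx)
  have hpos : 0 ≤ ∫ x, T.indicator 1 x * ψ x ∂μ := by
    refine integral_nonneg fun x => ?_
    rw [Pi.zero_apply]
    by_cases hx : 0 ≤ ψ x
    · rw [Set.indicator_of_mem (show x ∈ T from hx), Pi.one_apply, one_mul]; exact hx
    · rw [Set.indicator_of_notMem (show x ∉ T from hx), zero_mul]
  have hneg : ∫ x, T'.indicator 1 x * ψ x ∂μ ≤ 0 := by
    refine integral_nonpos fun x => ?_
    rw [Pi.zero_apply]
    by_cases hx : ψ x ≤ 0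
    · rw [Set.indicator_of_mem (show x ∈ T' from hx), Pi.one_apply, one_mul]; exact hx
    · rw [Set.indicator_of_notMem (show x ∉ T' from hx), zero_mul]
  rcases le_total 0 (∫ x, g x * ψ x ∂μ) with h0 | h0
  · refine ⟨T, hTm, ?_⟩
    rw [key g hg hg1', key (T.indicator 1) (measurable_one.indicator hTm) (indicator_abs_le_one T),
      abs_of_nonneg h0, abs_of_nonneg hpos]
    exact hle1
  · refine ⟨T', hT'm, ?_⟩
    rw [key g hg hg1', key (T'.indicator 1) (measurable_one.indicator hT'm) (indicator_abs_le_one T'),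
      abs_of_nonpos h0, abs_of_nonpos hneg]
    exact neg_le_neg hle2

lemma step_snd (G : K × K → ℝ) (hG : Integrable G (μ.prod μ))
    {g : K → ℝ} (hg : Measurable g) (hg0 : ∀ x, 0 ≤ g x) (hg1 : ∀ x, g x ≤ 1) :
    ∃ T : Set K, MeasurableSet T ∧
      |∫ p, G p * g p.2 ∂(μ.prod μ)| ≤ |∫ p, G p * T.indicator 1 p.2 ∂(μ.prod μ)| := by
  have hφ : Integrable (fun y => ∫ x, G (x, y) ∂μ) μ := hG.integral_prod_right
  set ψ : K → ℝ := hφ.1.mk _ with hψdef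
  have hψm : StronglyMeasurable ψ := hφ.1.stronglyMeasurable_mk
  have hψe : (fun y => ∫ x, G (x, y) ∂μ) =ᵐ[μ] ψ := hφ.1.ae_eq_mk
  have hψint : Integrable ψ μ := hφ.congr hψe
  have key : ∀ a : K → ℝ, Measurable a → (∀ x, |a x| ≤ 1) →
      ∫ p, G p * a p.2 ∂(μ.prod μ) = ∫ y, a y * ψ y ∂μ := by
    intro a ham ha1
    have hint : Integrable (fun p : K × K => G p * a p.2) (μ.prod μ) := by
      have h : (fun p : K × K => G p * a p.2) = fun p => a p.2 * G p := by funext p; ring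
      rw [h]
      exact hG.bdd_mul (c := 1) (ham.comp measurable_snd).aestronglyMeasurable
        (Filter.Eventually.of_forall fun p => by simpa [Real.norm_eq_abs] using ha1 p.2)
    rw [MeasureTheory.integral_prod_symm _ hint]
    have h2 : ∀ y, ∫ x, G (x, y) * a y ∂μ = a y * ∫ x, G (x, y) ∂μ := by
      intro y; rw [integral_mul_const]; ring
    simp_rw [h2]
    exact integral_congr_ae (hψe.mono fun y hy => congrArg (fun t => a y * t) hy)
  set T : Set K := {x | 0 ≤ ψ x} with hTdef
  set T' : Set K := {x | ψ x ≤ 0} with hT'def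
  have hTm : MeasurableSet T := measurableSet_le measurable_const hψm.measurable
  have hT'm : MeasurableSet T' := measurableSet_le hψm.measurable measurable_const
  have hg1' : ∀ x, |g x| ≤ 1 := fun x => by rw [abs_of_nonneg (hg0 x)]; exact hg1 x
  have hgψ : Integrable (fun x => g x * ψ x) μ :=
    hψint.bdd_mul (c := 1) hg.aestronglyMeasurable (Filter.Eventually.of_forall fun x => by simpa [Real.norm_eq_abs] using hg1' x)
  have hTψ : Integrable (fun x => T.indicator 1 x * ψ x) μ :=
    hψint.bdd_mul (c := 1) (measurable_one.indicator hTm).aestronglyMeasurable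
      (Filter.Eventually.of_forall fun x => by simpa [Real.norm_eq_abs] using indicator_abs_le_one T x)
  have hT'ψ : Integrable (fun x => T'.indicator 1 x * ψ x) μ :=
    hψint.bdd_mul (c := 1) (measurable_one.indicator hT'm).aestronglyMeasurable
      (Filter.Eventually.of_forall fun x => by simpa [Real.norm_eq_abs] using indicator_abs_le_one T' x)
  have hle1 : ∫ x, g x * ψ x ∂μ ≤ ∫ x, T.indicator 1 x * ψ x ∂μ := by
    refine integral_mono hgψ hTψ fun x => ?_
    by_cases hx : 0 ≤ ψ x
    · rw [Set.indicator_of_mem (show x ∈ T from hx), Pi.one_apply, one_mul]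
      exact mul_le_of_le_one_left hx (hg1 x)
    · rw [Set.indicator_of_notMem (show x ∉ T from hx), zero_mul]
      exact mul_nonpos_iff.mpr (Or.inl ⟨hg0 x, le_of_not_ge hx⟩)
  have hle2 : ∫ x, T'.indicator 1 x * ψ x ∂μ ≤ ∫ x, g x * ψ x ∂μ := by
    refine integral_mono hT'ψ hgψ fun x => ?_
    by_cases hx : ψ x ≤ 0
    · rw [Set.indicator_of_mem (show x ∈ T' from hx), Pi.one_apply, one_mul]
      nlinarith [hg0 x, hg1 x]
    · rw [Set.indicator_of_notMem (show x ∉ T' from hx), zero_mul]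
      exact mul_nonneg (hg0 x) (le_of_not_ge hx)
  have hpos : 0 ≤ ∫ x, T.indicator 1 x * ψ x ∂μ := by
    refine integral_nonneg fun x => ?_
    rw [Pi.zero_apply]
    by_cases hx : 0 ≤ ψ x
    · rw [Set.indicator_of_mem (show x ∈ T from hx), Pi.one_apply, one_mul]; exact hx
    · rw [Set.indicator_of_notMem (show x ∉ T from hx), zero_mul]
  have hneg : ∫ x, T'.indicator 1 x * ψ x ∂μ ≤ 0 := by
    refine integral_nonpos fun x => ?_
    rw [Pi.zero_apply]
    by_cases hx : ψ x ≤ 0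
    · rw [Set.indicator_of_mem (show x ∈ T' from hx), Pi.one_apply, one_mul]; exact hx
    · rw [Set.indicator_of_notMem (show x ∉ T' from hx), zero_mul]
  rcases le_total 0 (∫ x, g x * ψ x ∂μ) with h0 | h0
  · refine ⟨T, hTm, ?_⟩
    rw [key g hg hg1', key (T.indicator 1) (measurable_one.indicator hTm) (indicator_abs_le_one T),
      abs_of_nonneg h0, abs_of_nonneg hpos]
    exact hle1
  · refine ⟨T', hT'm, ?_⟩
    rw [key g hg hg1', key (T'.indicator 1) (measurable_one.indicator hT'm) (indicator_abs_le_one T'),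
      abs_of_nonpos h0, abs_of_nonpos hneg]
    exact neg_le_neg hle2

end helpers

section helpers2

variable {K : Type*} [MeasurableSpace K] {μ : Measure K} [IsFiniteMeasure μ]

lemma indicator_abs_le_one' (T : Set K) (x : K) : |T.indicator (1 : K → ℝ) x| ≤ 1 := by
  by_cases hx : x ∈ T <;> simp [Set.indicator_apply, hx]

lemma integrable_mul_comp' {F : K × K → ℝ} (hF : Integrable F (μ.prod μ))
    {a b : K → ℝ} (ha : Measurable a) (hb : Measurable b)
    (ha1 : ∀ x, |a x| ≤ 1) (hb1 : ∀ x, |b x| ≤ 1) :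
    Integrable (fun p : K × K => F p * a p.1 * b p.2) (μ.prod μ) := by
  have h : (fun p : K × K => F p * a p.1 * b p.2)
      = fun p => (a p.1 * b p.2) * F p := by funext p; ring
  rw [h]
  refine hF.bdd_mul (c := 1) ?_ (Filter.Eventually.of_forall fun p => ?_)
  · exact ((ha.comp measurable_fst).mul (hb.comp measurable_snd)).aestronglyMeasurable
  · rw [Real.norm_eq_abs, abs_mul]
    exact mul_le_one₀ (ha1 p.1) (abs_nonneg _) (hb1 p.2)

lemma term_le_intAbs {F : K × K → ℝ} (hF : Integrable F (μ.prod μ))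
    {a b : K → ℝ} (ha : Measurable a) (hb : Measurable b)
    (ha1 : ∀ x, |a x| ≤ 1) (hb1 : ∀ x, |b x| ≤ 1) :
    |∫ p, F p * a p.1 * b p.2 ∂(μ.prod μ)| ≤ ∫ p, |F p| ∂(μ.prod μ) := by
  have h1 := integrable_mul_comp' hF ha hb ha1 hb1
  calc |∫ p, F p * a p.1 * b p.2 ∂(μ.prod μ)|
      ≤ ∫ p, |F p * a p.1 * b p.2| ∂(μ.prod μ) := by
        simpa only [Real.norm_eq_abs] using norm_integral_le_integral_norm
          (fun p : K × K => F p * a p.1 * b p.2) (μ := μ.prod μ)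
    _ ≤ ∫ p, |F p| ∂(μ.prod μ) := by
        refine integral_mono h1.abs hF.abs fun p => ?_
        rw [abs_mul, abs_mul]
        have hh1 : |F p| * |a p.1| ≤ |F p| := mul_le_of_le_one_right (abs_nonneg _) (ha1 p.1)
        have hh2 : |F p| * |a p.1| * |b p.2| ≤ |F p| * |a p.1| :=
          mul_le_of_le_one_right (mul_nonneg (abs_nonneg _) (abs_nonneg _)) (hb1 p.2)
        exact hh2.trans hh1

lemma pert_fst {F : K × K → ℝ} (hF : Integrable F (μ.prod μ))
    {a a' b : K → ℝ} (ha : Measurable a) (ha' : Measurable a') (hb : Measurable b)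
    (ha1 : ∀ x, |a x| ≤ 1) (ha'1 : ∀ x, |a' x| ≤ 1) (hb1 : ∀ x, |b x| ≤ 1)
    {s : Set K} (hs : MeasurableSet s) (hagree : ∀ x ∉ s, a x = a' x) :
    |∫ p, F p * a p.1 * b p.2 ∂(μ.prod μ) - ∫ p, F p * a' p.1 * b p.2 ∂(μ.prod μ)|
      ≤ 2 * ∫ p in s ×ˢ (Set.univ : Set K), |F p| ∂(μ.prod μ) := by
  have h1 := integrable_mul_comp' hF ha hb ha1 hb1
  have h2 := integrable_mul_comp' hF ha' hb ha'1 hb1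
  have hsm : MeasurableSet (s ×ˢ (Set.univ : Set K)) := hs.prod MeasurableSet.univ
  rw [← integral_sub h1 h2]
  calc |∫ p, (F p * a p.1 * b p.2 - F p * a' p.1 * b p.2) ∂(μ.prod μ)|
      ≤ ∫ p, |F p * a p.1 * b p.2 - F p * a' p.1 * b p.2| ∂(μ.prod μ) := by
        simpa only [Real.norm_eq_abs] using norm_integral_le_integral_norm
          (fun p : K × K => F p * a p.1 * b p.2 - F p * a' p.1 * b p.2) (μ := μ.prod μ)
    _ ≤ ∫ p, (s ×ˢ (Set.univ : Set K)).indicator (fun p => 2 * |F p|) p ∂(μ.prod μ) := by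
        refine integral_mono (h1.sub h2).abs ((hF.abs.const_mul 2).indicator hsm) fun p => ?_
        by_cases hp : p.1 ∈ s
        · rw [Set.indicator_of_mem (Set.mem_prod.mpr ⟨hp, Set.mem_univ _⟩)]
          have he : F p * a p.1 * b p.2 - F p * a' p.1 * b p.2
              = F p * ((a p.1 - a' p.1) * b p.2) := by ring
          rw [he, abs_mul]
          have hd : |a p.1 - a' p.1| ≤ 2 := (abs_sub _ _).trans (by linarith [ha1 p.1, ha'1 p.1])
          have hc : |(a p.1 - a' p.1) * b p.2| ≤ 2 := by
            rw [abs_mul]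
            calc |a p.1 - a' p.1| * |b p.2| ≤ 2 * 1 :=
                  mul_le_mul hd (hb1 p.2) (abs_nonneg _) (by norm_num)
              _ = 2 := by ring
          calc |F p| * |(a p.1 - a' p.1) * b p.2| ≤ |F p| * 2 :=
                mul_le_mul_of_nonneg_left hc (abs_nonneg _)
            _ = 2 * |F p| := by ring
        · rw [Set.indicator_of_notMem (fun hmem => hp (Set.mem_prod.mp hmem).1),
            hagree p.1 hp, sub_self, abs_zero]
    _ = 2 * ∫ p in s ×ˢ (Set.univ : Set K), |F p| ∂(μ.prod μ) := by
        rw [integral_indicator hsm, integral_const_mul]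

lemma pert_snd {F : K × K → ℝ} (hF : Integrable F (μ.prod μ))
    {a b b' : K → ℝ} (ha : Measurable a) (hb : Measurable b) (hb' : Measurable b')
    (ha1 : ∀ x, |a x| ≤ 1) (hb1 : ∀ x, |b x| ≤ 1) (hb'1 : ∀ x, |b' x| ≤ 1)
    {s : Set K} (hs : MeasurableSet s) (hagree : ∀ x ∉ s, b x = b' x) :
    |∫ p, F p * a p.1 * b p.2 ∂(μ.prod μ) - ∫ p, F p * a p.1 * b' p.2 ∂(μ.prod μ)|
      ≤ 2 * ∫ p in (Set.univ : Set K) ×ˢ s, |F p| ∂(μ.prod μ) := by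
  have h1 := integrable_mul_comp' hF ha hb ha1 hb1
  have h2 := integrable_mul_comp' hF ha hb' ha1 hb'1
  have hsm : MeasurableSet ((Set.univ : Set K) ×ˢ s) := MeasurableSet.univ.prod hs
  rw [← integral_sub h1 h2]
  calc |∫ p, (F p * a p.1 * b p.2 - F p * a p.1 * b' p.2) ∂(μ.prod μ)|
      ≤ ∫ p, |F p * a p.1 * b p.2 - F p * a p.1 * b' p.2| ∂(μ.prod μ) := by
        simpa only [Real.norm_eq_abs] using norm_integral_le_integral_norm
          (fun p : K × K => F p * a p.1 * b p.2 - F p * a p.1 * b' p.2) (μ := μ.prod μ)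
    _ ≤ ∫ p, ((Set.univ : Set K) ×ˢ s).indicator (fun p => 2 * |F p|) p ∂(μ.prod μ) := by
        refine integral_mono (h1.sub h2).abs ((hF.abs.const_mul 2).indicator hsm) fun p => ?_
        by_cases hp : p.2 ∈ s
        · rw [Set.indicator_of_mem (Set.mem_prod.mpr ⟨Set.mem_univ _, hp⟩)]
          have he : F p * a p.1 * b p.2 - F p * a p.1 * b' p.2
              = F p * ((b p.2 - b' p.2) * a p.1) := by ring
          rw [he, abs_mul]
          have hd : |b p.2 - b' p.2| ≤ 2 := (abs_sub _ _).trans (by linarith [hb1 p.2, hb'1 p.2])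
          have hc : |(b p.2 - b' p.2) * a p.1| ≤ 2 := by
            rw [abs_mul]
            calc |b p.2 - b' p.2| * |a p.1| ≤ 2 * 1 :=
                  mul_le_mul hd (ha1 p.1) (abs_nonneg _) (by norm_num)
              _ = 2 := by ring
          calc |F p| * |(b p.2 - b' p.2) * a p.1| ≤ |F p| * 2 :=
                mul_le_mul_of_nonneg_left hc (abs_nonneg _)
            _ = 2 * |F p| := by ring
        · rw [Set.indicator_of_notMem (fun hmem => hp (Set.mem_prod.mp hmem).2),
            hagree p.2 hp, sub_self, abs_zero]
    _ = 2 * ∫ p in (Set.univ : Set K) ×ˢ s, |F p| ∂(μ.prod μ) := by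
        rw [integral_indicator hsm, integral_const_mul]

lemma setIntegral_prod_indicator {F : K × K → ℝ} {T U : Set K}
    (hT : MeasurableSet T) (hU : MeasurableSet U) :
    ∫ p in T ×ˢ U, F p ∂(μ.prod μ)
      = ∫ p, F p * T.indicator 1 p.1 * U.indicator 1 p.2 ∂(μ.prod μ) := by
  rw [← integral_indicator (hT.prod hU)]
  refine integral_congr_ae (Filter.Eventually.of_forall fun p => ?_)
  by_cases h1 : p.1 ∈ T <;> by_cases h2 : p.2 ∈ U <;>
    simp [Set.indicator_apply, Set.mem_prod, h1, h2]

lemma abscont {α : Type*} [MeasurableSpace α] {m : Measure α} {F : α → ℝ}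
    (hF : Integrable F m) {ε : ℝ} (hε : 0 < ε) :
    ∃ δ : ENNReal, 0 < δ ∧ ∀ s : Set α, MeasurableSet s → m s < δ → ∫ x in s, |F x| ∂m ≤ ε := by
  obtain ⟨δ, δpos, hδ⟩ := exists_pos_setLIntegral_lt_of_measure_lt (μ := m)
    (f := fun a => (‖F a‖₊ : ENNReal)) hF.2.ne (ENNReal.ofReal_pos.2 hε).ne'
  refine ⟨δ, δpos, fun s hs hsδ => ?_⟩
  have h1 := (hδ s hsδ).le
  have h2 : ∫ x in s, |F x| ∂m = (∫⁻ x in s, (‖F x‖₊ : ENNReal) ∂m).toReal := by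
    simp_rw [← Real.norm_eq_abs]
    exact integral_norm_eq_lintegral_enorm hF.1.restrict
  rw [h2]
  exact ENNReal.toReal_le_of_le_ofReal hε.le h1

end helpers2

noncomputable def cutNorm {S : Type*} [MeasurableSpace S] (μ : Measure S)
    (F : S × S → ℝ) : ℝ :=
  ⨆ TU : {TU : Set S × Set S // MeasurableSet TU.1 ∧ MeasurableSet TU.2},
    |∫ p in TU.1.1 ×ˢ TU.1.2, F p ∂(μ.prod μ)|

theorem cutNorm_eq_sup_continuous {K : Type*} [MetricSpace K] [CompactSpace K]
    [MeasurableSpace K] [BorelSpace K]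
    (μ : Measure K) [IsFiniteMeasure μ]
    (F : K × K → ℝ) (hF : Integrable F (μ.prod μ)) :
    cutNorm μ F =
      ⨆ gh : {gh : C(K, ℝ) × C(K, ℝ) //
          (∀ x, gh.1 x ∈ Set.Icc (0:ℝ) 1) ∧ (∀ x, gh.2 x ∈ Set.Icc (0:ℝ) 1)},
        |∫ p, F p * gh.1.1 p.1 * gh.1.2 p.2 ∂(μ.prod μ)| := by
  classical
  haveI hne1 : Nonempty {TU : Set K × Set K // MeasurableSet TU.1 ∧ MeasurableSet TU.2} :=
    ⟨⟨(∅, ∅), MeasurableSet.empty, MeasurableSet.empty⟩⟩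
  haveI hne2 : Nonempty {gh : C(K, ℝ) × C(K, ℝ) //
      (∀ x, gh.1 x ∈ Set.Icc (0:ℝ) 1) ∧ (∀ x, gh.2 x ∈ Set.Icc (0:ℝ) 1)} :=
    ⟨⟨(ContinuousMap.const K 0, ContinuousMap.const K 0),
      fun _ => ⟨le_rfl, zero_le_one⟩, fun _ => ⟨le_rfl, zero_le_one⟩⟩⟩
  have hboundB : ∀ gh : {gh : C(K, ℝ) × C(K, ℝ) //
      (∀ x, gh.1 x ∈ Set.Icc (0:ℝ) 1) ∧ (∀ x, gh.2 x ∈ Set.Icc (0:ℝ) 1)},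
      |∫ p, F p * gh.1.1 p.1 * gh.1.2 p.2 ∂(μ.prod μ)| ≤ ∫ p, |F p| ∂(μ.prod μ) := by
    rintro ⟨⟨g, h⟩, hg, hh⟩
    exact term_le_intAbs hF g.continuous.measurable h.continuous.measurable
      (fun x => abs_le.mpr ⟨by linarith [(hg x).1], (hg x).2⟩)
      (fun x => abs_le.mpr ⟨by linarith [(hh x).1], (hh x).2⟩)
  have hbddB : BddAbove (Set.range fun gh : {gh : C(K, ℝ) × C(K, ℝ) //
      (∀ x, gh.1 x ∈ Set.Icc (0:ℝ) 1) ∧ (∀ x, gh.2 x ∈ Set.Icc (0:ℝ) 1)} =>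
      |∫ p, F p * gh.1.1 p.1 * gh.1.2 p.2 ∂(μ.prod μ)|) :=
    ⟨∫ p, |F p| ∂(μ.prod μ), by rintro _ ⟨i, rfl⟩; exact hboundB i⟩
  have hboundA : ∀ TU : {TU : Set K × Set K // MeasurableSet TU.1 ∧ MeasurableSet TU.2},
      |∫ p in TU.1.1 ×ˢ TU.1.2, F p ∂(μ.prod μ)| ≤ ∫ p, |F p| ∂(μ.prod μ) := by
    rintro ⟨⟨T, U⟩, hT, hU⟩
    dsimp only
    rw [setIntegral_prod_indicator hT hU]
    exact term_le_intAbs hF (measurable_one.indicator hT) (measurable_one.indicator hU)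
      (indicator_abs_le_one' T) (indicator_abs_le_one' U)
  have hbddA : BddAbove (Set.range fun TU : {TU : Set K × Set K //
      MeasurableSet TU.1 ∧ MeasurableSet TU.2} =>
      |∫ p in TU.1.1 ×ˢ TU.1.2, F p ∂(μ.prod μ)|) :=
    ⟨∫ p, |F p| ∂(μ.prod μ), by rintro _ ⟨i, rfl⟩; exact hboundA i⟩
  unfold cutNorm
  apply le_antisymm
  · refine ciSup_le ?_
    rintro ⟨⟨T, U⟩, hT, hU⟩
    dsimp only
    refine le_of_forall_pos_le_add fun ε hε => ?_
    obtain ⟨δ, δpos, hδ⟩ := abscont hF (show (0:ℝ) < ε/8 by linarith)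
    set c : ENNReal := μ Set.univ with hc
    have hc2 : (c + 1) ≠ ⊤ := by finiteness
    set δ' : ENNReal := δ / (c + 1) / 2 with hδ'
    have hδ'pos : 0 < δ' := ENNReal.div_pos (ENNReal.div_pos δpos.ne' hc2).ne' (by norm_num)
    have approx : ∀ (T : Set K), MeasurableSet T → ∃ s : Set K, MeasurableSet s ∧
        (μ.prod μ) (s ×ˢ (Set.univ : Set K)) < δ ∧
        ∃ g : C(K, ℝ), (∀ x, g x ∈ Set.Icc (0:ℝ) 1) ∧
          ∀ x ∉ s, T.indicator (1 : K → ℝ) x = g x := by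
      intro T hT
      obtain ⟨CT, hCTsub, hCTcl, hCT⟩ :=
        hT.exists_isClosed_diff_lt (measure_ne_top μ T) hδ'pos.ne'
      obtain ⟨VT, hVTsup, hVTop, -, hVT⟩ :=
        hT.exists_isOpen_diff_lt (measure_ne_top μ T) hδ'pos.ne'
      have hsubT : CT ⊆ VT := hCTsub.trans hVTsup
      have hmT : μ (VT \ CT) < δ / (c + 1) := by
        have hsub : VT \ CT ⊆ (VT \ T) ∪ (T \ CT) := by
          intro x hx
          rcases Classical.em (x ∈ T) with h | h
          · exact Or.inr ⟨h, hx.2⟩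
          · exact Or.inl ⟨hx.1, h⟩
        calc μ (VT \ CT) ≤ μ ((VT \ T) ∪ (T \ CT)) := measure_mono hsub
          _ ≤ μ (VT \ T) + μ (T \ CT) := measure_union_le _ _
          _ < δ' + δ' := ENNReal.add_lt_add hVT hCT
          _ = 2 * δ' := (two_mul δ').symm
          _ = δ / (c + 1) := by
              rw [hδ', ENNReal.mul_div_cancel' (by norm_num) (by norm_num)]
      have hmsT : MeasurableSet (VT \ CT) := hVTop.measurableSet.diff hCTcl.measurableSet
      refine ⟨VT \ CT, hmsT, ?_, ?_⟩
      · rw [Measure.prod_prod]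
        calc μ (VT \ CT) * μ Set.univ ≤ μ (VT \ CT) * (c + 1) :=
              mul_le_mul_right le_self_add _
          _ < δ := ENNReal.mul_lt_of_lt_div hmT
      · obtain ⟨g, hg0, hg1, hgI⟩ := exists_continuous_zero_one_of_isClosed
          hVTop.isClosed_compl hCTcl (disjoint_compl_left.mono_right hsubT)
        refine ⟨g, hgI, fun x hx => ?_⟩
        rcases Classical.em (x ∈ CT) with h | h
        · have := hg1 h
          simp [Set.indicator_of_mem (hCTsub h), this]
        · have hxV : x ∉ VT := fun hV => hx ⟨hV, h⟩
          have := hg0 (show x ∈ VTᶜ from hxV)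
          simp [Set.indicator_of_notMem (fun hT'' => hxV (hVTsup hT'')), this]
    obtain ⟨sT, hsTm, hsTδ, g, hgI, hgagree⟩ := approx T hT
    obtain ⟨sU, hsUm, hsUδ, h, hhI, hhagree⟩ := approx U hU
    have hgabs : ∀ x, |g x| ≤ 1 := fun x => abs_le.mpr ⟨by linarith [(hgI x).1], (hgI x).2⟩
    have hhabs : ∀ x, |h x| ≤ 1 := fun x => abs_le.mpr ⟨by linarith [(hhI x).1], (hhI x).2⟩
    have hintT : ∫ p in sT ×ˢ (Set.univ : Set K), |F p| ∂(μ.prod μ) ≤ ε/8 :=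
      hδ _ (hsTm.prod MeasurableSet.univ) hsTδ
    have hsUδ' : (μ.prod μ) ((Set.univ : Set K) ×ˢ sU) < δ := by
      rw [Measure.prod_prod] at hsUδ ⊢
      rwa [mul_comm]
    have hintU : ∫ p in (Set.univ : Set K) ×ˢ sU, |F p| ∂(μ.prod μ) ≤ ε/8 :=
      hδ _ (MeasurableSet.univ.prod hsUm) hsUδ'
    have e1 : |∫ p, F p * T.indicator 1 p.1 * U.indicator 1 p.2 ∂(μ.prod μ)
        - ∫ p, F p * g p.1 * U.indicator 1 p.2 ∂(μ.prod μ)| ≤ ε/4 := by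
      have := pert_fst hF (measurable_one.indicator hT) g.continuous.measurable
        (measurable_one.indicator hU) (indicator_abs_le_one' T) hgabs
        (indicator_abs_le_one' U) hsTm hgagree
      calc _ ≤ 2 * ∫ p in sT ×ˢ (Set.univ : Set K), |F p| ∂(μ.prod μ) := this
        _ ≤ 2 * (ε/8) := by linarith [hintT]
        _ = ε/4 := by ring
    have e2 : |∫ p, F p * g p.1 * U.indicator 1 p.2 ∂(μ.prod μ)
        - ∫ p, F p * g p.1 * h p.2 ∂(μ.prod μ)| ≤ ε/4 := by
      have := pert_snd hF g.continuous.measurable (measurable_one.indicator hU)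
        h.continuous.measurable hgabs (indicator_abs_le_one' U) hhabs hsUm hhagree
      calc _ ≤ 2 * ∫ p in (Set.univ : Set K) ×ˢ sU, |F p| ∂(μ.prod μ) := this
        _ ≤ 2 * (ε/8) := by linarith [hintU]
        _ = ε/4 := by ring
    have e3 : |∫ p in T ×ˢ U, F p ∂(μ.prod μ)|
        ≤ |∫ p, F p * g p.1 * h p.2 ∂(μ.prod μ)| + ε := by
      rw [setIntegral_prod_indicator hT hU]
      set A := ∫ p, F p * T.indicator 1 p.1 * U.indicator 1 p.2 ∂(μ.prod μ) with hA
      set B2 := ∫ p, F p * g p.1 * U.indicator 1 p.2 ∂(μ.prod μ) with hB2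
      set C2 := ∫ p, F p * g p.1 * h p.2 ∂(μ.prod μ) with hC2
      have h1 : |A| ≤ |C2| + |A - C2| := by
        calc |A| = |C2 + (A - C2)| := by ring_nf
          _ ≤ |C2| + |A - C2| := abs_add_le _ _
      have h2 : |A - C2| ≤ |A - B2| + |B2 - C2| := abs_sub_le A B2 C2
      linarith
    have e4 : |∫ p, F p * g p.1 * h p.2 ∂(μ.prod μ)|
        ≤ ⨆ gh : {gh : C(K, ℝ) × C(K, ℝ) //
          (∀ x, gh.1 x ∈ Set.Icc (0:ℝ) 1) ∧ (∀ x, gh.2 x ∈ Set.Icc (0:ℝ) 1)},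
          |∫ p, F p * gh.1.1 p.1 * gh.1.2 p.2 ∂(μ.prod μ)| :=
      le_ciSup hbddB ⟨(g, h), hgI, hhI⟩
    linarith
  · refine ciSup_le ?_
    rintro ⟨⟨g, h⟩, hg, hh⟩
    dsimp only
    have hgm := g.continuous.measurable
    have hhm := h.continuous.measurable
    have hg0 : ∀ x, 0 ≤ g x := fun x => (hg x).1
    have hg1 : ∀ x, g x ≤ 1 := fun x => (hg x).2
    have hh0 : ∀ x, 0 ≤ h x := fun x => (hh x).1
    have hh1 : ∀ x, h x ≤ 1 := fun x => (hh x).2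
    have hgabs : ∀ x, |g x| ≤ 1 := fun x => abs_le.mpr ⟨by linarith [hg0 x], hg1 x⟩
    have hG1 : Integrable (fun p : K × K => F p * g p.1) (μ.prod μ) := by
      have he : (fun p : K × K => F p * g p.1) = fun p => g p.1 * F p := by funext p; ring
      rw [he]
      exact hF.bdd_mul (c := 1) (hgm.comp measurable_fst).aestronglyMeasurable
        (Filter.Eventually.of_forall fun p => by simpa [Real.norm_eq_abs] using hgabs p.1)
    obtain ⟨U, hUm, hUle⟩ := step_snd _ hG1 hhm hh0 hh1
    have hG2 : Integrable (fun p : K × K => F p * U.indicator 1 p.2) (μ.prod μ) := by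
      have he : (fun p : K × K => F p * U.indicator 1 p.2)
          = fun p => U.indicator (1 : K → ℝ) p.2 * F p := by funext p; ring
      rw [he]
      exact hF.bdd_mul (c := 1) ((measurable_one.indicator hUm).comp measurable_snd).aestronglyMeasurable
        (Filter.Eventually.of_forall fun p => by simpa [Real.norm_eq_abs] using indicator_abs_le_one' U p.2)
    obtain ⟨T, hTm, hTle⟩ := step_fst _ hG2 hgm hg0 hg1
    have heq1 : ∫ p, F p * g p.1 * U.indicator 1 p.2 ∂(μ.prod μ)
        = ∫ p, (F p * U.indicator 1 p.2) * g p.1 ∂(μ.prod μ) :=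
      integral_congr_ae (Filter.Eventually.of_forall fun p => by ring)
    have heq2 : ∫ p, (F p * U.indicator 1 p.2) * T.indicator 1 p.1 ∂(μ.prod μ)
        = ∫ p in T ×ˢ U, F p ∂(μ.prod μ) := by
      rw [setIntegral_prod_indicator hTm hUm]
      exact integral_congr_ae (Filter.Eventually.of_forall fun p => by ring)
    calc |∫ p, F p * g p.1 * h p.2 ∂(μ.prod μ)|
        ≤ |∫ p, F p * g p.1 * U.indicator 1 p.2 ∂(μ.prod μ)| := hUle
      _ = |∫ p, (F p * U.indicator 1 p.2) * g p.1 ∂(μ.prod μ)| := by rw [heq1]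
      _ ≤ |∫ p, (F p * U.indicator 1 p.2) * T.indicator 1 p.1 ∂(μ.prod μ)| := hTle
      _ = |∫ p in T ×ˢ U, F p ∂(μ.prod μ)| := by rw [heq2]
      _ ≤ _ := le_ciSup hbddA ⟨(T, U), hTm, hUm⟩
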